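/- arXiv:1608.06274 — 3 statements merged into one kernel-verified Lean document; each statement's English description precedes it below -/
import Mathlib

section
/- Let v be an ab-monomial beginning with the letter a, let k ≥ 1 be an integer, and let x be either a or b. Then 2·φ_t(v·a·bᵏ·x) = 2·κ(v·a·bᵏ·x) + ω(v·a·b^{k+1}). -/
open scoped TensorProduct

noncomputable section

namespace CD


/-- ab-words: `false` represents the letter `a`, `true` represents the letter `b`. -/
abbrev Word := List Bool

/-- The free associative ℤ-algebra ℤ⟨a,b⟩ on two noncommuting variables. -/
abbrev ZAB := MonoidAlgebra ℤ (FreeMonoid Bool)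

/-- The ab-monomial associated to a word. -/
def mon (w : Word) : ZAB := MonoidAlgebra.single (FreeMonoid.ofList w) 1

/-- The variable `a`. -/
def genA : ZAB := mon [false]
/-- The variable `b`. -/
def genB : ZAB := mon [true]
/-- `c = a + b`. -/
def genC : ZAB := genA + genB
/-- `d = ab + ba`. -/
def genD : ZAB := genA * genB + genB * genA
/-- `a - b`. -/
def amb : ZAB := genA - genB

/-- Extend a function defined on ab-monomials to a ℤ-linear map on ℤ⟨a,b⟩. -/
def lin (f : Word → ZAB) : ZAB →ₗ[ℤ] ZAB :=
  Finsupp.lift ZAB ℤ (FreeMonoid Bool) (fun w => f (FreeMonoid.toList w)) ∘ₗ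
    (MonoidAlgebra.coeffLinearEquiv ℤ).toLinearMap

/-- κ : κ(aᵐ) = (a-b)ᵐ, and 0 on all other ab-monomials. -/
def kappaW (w : Word) : ZAB :=
  if ∀ x ∈ w, x = false then amb ^ w.length else 0

/-- β : β(bᵐ) = (a-b)ᵐ, and 0 on all other ab-monomials. -/
def betaW (w : Word) : ZAB :=
  if ∀ x ∈ w, x = true then amb ^ w.length else 0

/-- η : η(bᵐaᵏ) = 2·(a-b)^{m+k}, and 0 on all other ab-monomials. -/
def etaW (w : Word) : ZAB :=
  if List.IsChain (· ≥ ·) w then (2 : ℤ) • amb ^ w.length else 0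

/-- λ_t : λ_t(bᵐ) = (a-b)ᵐ, λ_t(bᵐa) = (a-b)^{m+1}, and 0 on all other ab-monomials. -/
def lamTW (w : Word) : ZAB :=
  if List.IsChain (· ≥ ·) w ∧ w.count false ≤ 1 then amb ^ w.length else 0

/-- λ_ub = η - 2·β. -/
def lamUbW (w : Word) : ZAB := etaW w - (2 : ℤ) • betaW w

/-- ω : first replace each occurrence of ab by 2d, then each remaining letter by c. -/
def omegaW : Word → ZAB
  | [] => 1
  | false :: true :: w => ((2 : ℤ) • genD) * omegaW w
  | _ :: w => genC * omegaW w

/-- H′ : removes the last letter of an ab-monomial (`H′(1) = 0`). -/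
def HpW (w : Word) : ZAB := if w = [] then 0 else mon w.dropLast

/-- r : r(1) = 0, r(v·a) = v, r(v·b) = 0. -/
def rW (w : Word) : ZAB := if w.getLast? = some false then mon w.dropLast else 0

/-- The reversal involution on ab-monomials. -/
def revW (w : Word) : ZAB := mon w.reverse

/-- `conv F G (w) = Σ_w F(w₍₁₎)·b·G(w₍₂₎)`, the sum over the coproduct of the word `w`,
i.e. over all ways of removing one letter from `w`, splitting it in two pieces. -/
def conv (F G : Word → ZAB) (w : Word) : ZAB :=
  ∑ i ∈ Finset.range w.length, F (w.take i) * genB * G (w.drop (i + 1))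

/-- `tailChain lam j (w) = Σ_w η(w₍₁₎)·b·η(w₍₂₎)·b ⋯ b·η(w₍ⱼ₎)·b·lam(w₍ⱼ₊₁₎)`:
a chain of `j` η's followed by the map `lam`, summed over the iterated coproduct. -/
def tailChain (lam : Word → ZAB) : ℕ → Word → ZAB
  | 0 => lam
  | j + 1 => conv etaW (tailChain lam j)

/-- φ_k : φ_1 = κ and, for k ≥ 2, `φ_k(v) = Σ_v κ(v₍₁₎)·b·η(v₍₂₎)·b ⋯ b·η(v₍ₖ₎)`,
the sum over the iterated coproduct Δ^{k-1}. -/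
def phiK : ℕ → Word → ZAB
  | 0 => fun _ => 0
  | 1 => kappaW
  | k + 2 => conv kappaW (tailChain etaW k)

/-- φ_{t,k} : φ_{t,1} = κ and, for k ≥ 2,
`φ_{t,k}(v) = Σ_v κ(v₍₁₎)·b·η(v₍₂₎)·b ⋯ b·η(v₍ₖ₋₁₎)·b·λ_t(v₍ₖ₎)`. -/
def phiTK : ℕ → Word → ZAB
  | 0 => fun _ => 0
  | 1 => kappaW
  | k + 2 => conv kappaW (tailChain lamTW k)

/-- φ_{ub,k} : φ_{ub,1} = κ and, for k ≥ 2,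
`φ_{ub,k}(v) = Σ_v κ(v₍₁₎)·b·η(v₍₂₎)·b ⋯ b·η(v₍ₖ₋₁₎)·b·λ_ub(v₍ₖ₎)`. -/
def phiUbK : ℕ → Word → ZAB
  | 0 => fun _ => 0
  | 1 => kappaW
  | k + 2 => conv kappaW (tailChain lamUbW k)

/-- φ = Σ_{k ≥ 1} φ_k (on a word of length ℓ, only terms with k ≤ ℓ + 1 are nonzero). -/
def phiW (w : Word) : ZAB := ∑ k ∈ Finset.range (w.length + 2), phiK k w

/-- φ_t = Σ_{k ≥ 1} φ_{t,k}. -/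
def phiTW (w : Word) : ZAB := ∑ k ∈ Finset.range (w.length + 2), phiTK k w

/-- φ_ub = Σ_{k ≥ 1} φ_{ub,k}. -/
def phiUbW (w : Word) : ZAB := ∑ k ∈ Finset.range (w.length + 2), phiUbK k w

/-- The coproduct Δ on ℤ⟨a,b⟩: Δ(u₁u₂⋯uₙ) = Σᵢ u₁⋯u_{i-1} ⊗ u_{i+1}⋯uₙ. -/
def Delta : ZAB →ₗ[ℤ] (ZAB ⊗[ℤ] ZAB) :=
  Finsupp.lift (ZAB ⊗[ℤ] ZAB) ℤ (FreeMonoid Bool)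
    (fun w => ∑ i ∈ Finset.range (FreeMonoid.toList w).length,
      mon ((FreeMonoid.toList w).take i) ⊗ₜ[ℤ] mon ((FreeMonoid.toList w).drop (i + 1))) ∘ₗ
    (MonoidAlgebra.coeffLinearEquiv ℤ).toLinearMap

/-- For linear maps F, G, the linear map `u ⊗ w ↦ F(u)·b·G(w)`; applying it to Δ(v)
gives the Sweedler sum `Σ_v F(v₍₁₎)·b·G(v₍₂₎)`. -/
def sandwich (F G : ZAB →ₗ[ℤ] ZAB) : (ZAB ⊗[ℤ] ZAB) →ₗ[ℤ] ZAB :=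
  TensorProduct.lift
    (((LinearMap.mul ℤ ZAB).comp ((LinearMap.mulRight ℤ genB).comp F)).compl₂ G)



/-! ### Auxiliary lemmas for `two_phiT_abk` -/

section Aux

/-- μ : μ(bᵐ) = (a-b)^{m+1}, and 0 otherwise. -/
def muW (w : Word) : ZAB := if ∀ x ∈ w, x = true then amb ^ (w.length + 1) else 0

lemma chain'_true_cons (w : Word) :
    List.IsChain (· ≥ ·) (true :: w) ↔ List.IsChain (· ≥ ·) w := by
  rw [List.isChain_cons]
  simp only [and_iff_right_iff_imp]
  intro _ y _
  exact Bool.le_true y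

lemma chain'_false_cons (w : Word) :
    List.IsChain (· ≥ ·) (false :: w) ↔ ∀ x ∈ w, x = false := by
  induction w with
  | nil => simp
  | cons y w ih =>
    rw [List.isChain_cons_cons]
    constructor
    · rintro ⟨h1, h2⟩
      have hy : y = false := by
        cases y
        · rfl
        · exact absurd h1 (by decide)
      subst hy
      intro x hx
      rcases List.mem_cons.1 hx with h | h
      · exact h
      · exact (ih.1 h2) x h
    · intro h
      have hy : y = false := h y (List.mem_cons_self)
      subst hy
      exact ⟨le_refl _, ih.2 fun x hx => h x (List.mem_cons_of_mem _ hx)⟩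

lemma chain'_of_all_false {w : Word} (h : ∀ x ∈ w, x = false) :
    List.IsChain (· ≥ ·) w := by
  cases w with
  | nil => simp
  | cons y w =>
    have hy : y = false := h y (List.mem_cons_self)
    subst hy
    exact (chain'_false_cons w).2 fun x hx => h x (List.mem_cons_of_mem _ hx)

lemma all_false_of_chain' {w : Word} (hh : w.head? ≠ some true)
    (hc : List.IsChain (· ≥ ·) w) : ∀ x ∈ w, x = false := by
  cases w with
  | nil => simp
  | cons y w =>
    have hy : y = false := by
      cases y
      · rfl
      · exact absurd rfl hh
    subst hy
    rw [chain'_false_cons] at hc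
    intro x hx
    rcases List.mem_cons.1 hx with h | h
    · exact h
    · exact hc x h

lemma etaW_nil : etaW [] = (2 : ℤ) • 1 := by simp [etaW]

lemma etaW_true_cons (w : Word) : etaW (true :: w) = amb * etaW w := by
  by_cases h : List.IsChain (· ≥ ·) w
  · rw [etaW, if_pos ((chain'_true_cons w).2 h), etaW, if_pos h,
      List.length_cons, pow_succ', mul_smul_comm]
  · rw [etaW, if_neg (fun hc => h ((chain'_true_cons w).1 hc)), etaW, if_neg h, mul_zero]

lemma etaW_false_cons (w : Word) (hh : w.head? ≠ some true) :
    etaW (false :: w) = amb * etaW w := by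
  by_cases hall : ∀ x ∈ w, x = false
  · rw [etaW, if_pos ((chain'_false_cons w).2 hall), etaW, if_pos (chain'_of_all_false hall),
      List.length_cons, pow_succ', mul_smul_comm]
  · rw [etaW, if_neg (fun hc => hall ((chain'_false_cons w).1 hc)), etaW,
      if_neg (fun hc => hall (all_false_of_chain' hh hc)), mul_zero]

lemma etaW_false_true (w : Word) : etaW (false :: true :: w) = 0 := by
  rw [etaW, if_neg]
  intro hc
  exact absurd ((chain'_false_cons _).1 hc true (List.mem_cons_self)) (by decide)

lemma two_kappa (w : Word) (hh : w.head? ≠ some true) :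
    (2 : ℤ) • kappaW w = etaW w := by
  by_cases hall : ∀ x ∈ w, x = false
  · rw [kappaW, if_pos hall, etaW, if_pos (chain'_of_all_false hall)]
  · rw [kappaW, if_neg hall, etaW, if_neg (fun hc => hall (all_false_of_chain' hh hc)),
      smul_zero]

lemma kappaW_eq_zero {w : Word} (h : true ∈ w) : kappaW w = 0 := by
  rw [kappaW, if_neg]
  intro hall
  exact absurd (hall true h) (by decide)

lemma muW_nil : muW [] = amb := by simp [muW]

lemma muW_true_cons (w : Word) : muW (true :: w) = amb * muW w := by
  by_cases h : ∀ x ∈ w, x = true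
  · rw [muW, if_pos, muW, if_pos h, List.length_cons, pow_succ']
    · intro x hx
      rcases List.mem_cons.1 hx with h' | h'
      · exact h'
      · exact h x h'
  · rw [muW, if_neg, muW, if_neg h, mul_zero]
    intro hall
    exact h fun x hx => hall x (List.mem_cons_of_mem _ hx)

lemma muW_false_cons (w : Word) : muW (false :: w) = 0 := by
  rw [muW, if_neg]
  intro hall
  exact absurd (hall false (List.mem_cons_self)) (by decide)

lemma lamTW_nil : lamTW [] = 1 := by simp [lamTW]

lemma lamTW_true_cons (w : Word) : lamTW (true :: w) = amb * lamTW w := by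
  have hcnt : (true :: w).count false = w.count false := by simp [List.count_cons]
  by_cases h : List.IsChain (· ≥ ·) w ∧ w.count false ≤ 1
  · rw [lamTW, if_pos ⟨(chain'_true_cons w).2 h.1, by rw [hcnt]; exact h.2⟩,
      lamTW, if_pos h, List.length_cons, pow_succ']
  · rw [lamTW, if_neg, lamTW, if_neg h, mul_zero]
    rintro ⟨hc, hn⟩
    exact h ⟨(chain'_true_cons w).1 hc, by rw [← hcnt]; exact hn⟩

lemma lamT_append (w : Word) (z : Bool) : lamTW (w ++ [z]) = muW w := by
  induction w with
  | nil =>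
    rw [List.nil_append, muW_nil, lamTW, if_pos]
    · simp
    · refine ⟨List.isChain_singleton z, ?_⟩
      cases z <;> simp
  | cons y w ih =>
    cases y
    · rw [List.cons_append, muW_false_cons, lamTW, if_neg]
      rintro ⟨hc, hn⟩
      rw [chain'_false_cons] at hc
      have hz : z = false := hc z (by simp)
      have h1 : 0 < (w ++ [z]).count false := by
        rw [List.count_pos_iff]
        exact List.mem_append_right w (by rw [hz]; simp)
      have h2 : (false :: (w ++ [z])).count false = (w ++ [z]).count false + 1 := by
        simp [List.count_cons]
      omega
    · rw [List.cons_append, lamTW_true_cons, ih, muW_true_cons]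

lemma omegaW_nil : omegaW [] = 1 := rfl

lemma omegaW_true_cons (w : Word) : omegaW (true :: w) = genC * omegaW w := rfl

lemma omegaW_ff (w : Word) : omegaW (false :: false :: w) = genC * omegaW (false :: w) := rfl

lemma omegaW_ft (w : Word) : omegaW (false :: true :: w) = ((2 : ℤ) • genD) * omegaW w := rfl

lemma omegaW_fnil : omegaW [false] = genC * 1 := rfl

lemma conv_nil (F G : Word → ZAB) : conv F G [] = 0 := by simp [conv]

lemma conv_cons (F G : Word → ZAB) (x : Bool) (w : Word) :
    conv F G (x :: w) =
      (∑ i ∈ Finset.range w.length, F (x :: w.take i) * genB * G (w.drop (i + 1)))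
        + F [] * genB * G w := by
  rw [conv, List.length_cons, Finset.sum_range_succ']
  rfl

/-- The sum of all tail chains. -/
def GW (w : Word) : ZAB := ∑ j ∈ Finset.range (w.length + 1), tailChain lamTW j w

lemma GW_nil : GW [] = 1 := by
  rw [GW]
  simp [tailChain, lamTW_nil]

lemma tail_vanish : ∀ (j : ℕ) (w : Word), w.length < j → tailChain lamTW j w = 0 := by
  intro j
  induction j with
  | zero => intro w hw; omega
  | succ j ih =>
    intro w hw
    show conv etaW (tailChain lamTW j) w = 0
    rw [conv]
    refine Finset.sum_eq_zero fun i hi => ?_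
    have hi' := Finset.mem_range.1 hi
    rw [ih _ (by rw [List.length_drop]; omega), mul_zero]

lemma conv_GW (F : Word → ZAB) (w : Word) :
    conv F GW w = ∑ j ∈ Finset.range w.length, conv F (tailChain lamTW j) w := by
  rw [conv]
  have h : ∀ i ∈ Finset.range w.length,
      F (w.take i) * genB * GW (w.drop (i + 1))
        = ∑ j ∈ Finset.range w.length,
            F (w.take i) * genB * tailChain lamTW j (w.drop (i + 1)) := by
    intro i hi
    have hi' := Finset.mem_range.1 hi
    rw [GW, Finset.mul_sum]
    apply Finset.sum_subset
    · apply Finset.range_subset_range.2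
      rw [List.length_drop]
      omega
    · intro j _ hj
      have hj' : ¬ j < (w.drop (i + 1)).length + 1 := fun hc => hj (Finset.mem_range.2 hc)
      rw [List.length_drop] at hj'
      rw [tail_vanish j _ (by rw [List.length_drop]; omega), mul_zero]
  rw [Finset.sum_congr rfl h, Finset.sum_comm]
  exact Finset.sum_congr rfl fun j _ => by rw [conv]

lemma GW_eq (w : Word) : GW w = lamTW w + conv etaW GW w := by
  rw [conv_GW, GW, Finset.sum_range_succ', add_comm]
  rfl

lemma phiT_eq (w : Word) : phiTW w = kappaW w + conv kappaW GW w := by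
  rw [phiTW, conv_GW, Finset.sum_range_succ' _ (w.length + 1), Finset.sum_range_succ' _ w.length]
  show (∑ k ∈ Finset.range w.length, phiTK (k + 2) w + phiTK 1 w) + phiTK 0 w = _
  have h0 : phiTK 0 w = 0 := rfl
  have h1 : phiTK 1 w = kappaW w := rfl
  have h2 : ∀ k, phiTK (k + 2) w = conv kappaW (tailChain lamTW k) w := fun k => rfl
  simp only [h0, h1, Finset.sum_congr rfl fun k _ => h2 k]
  abel

lemma mul_reassoc (p q s : ZAB) : amb * p * q * s = amb * (p * q * s) := by
  simp [mul_assoc]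

lemma two_smul_helper : amb + (2 : ℤ) • genB = genC := by
  rw [amb, genC, two_smul]
  abel

/-- The key ω-expansion identity. -/
lemma omega_expand (w : Word) :
    omegaW (w ++ [true]) = muW w + etaW w * genB
      + conv etaW (fun u => omegaW (u ++ [true])) w := by
  induction w with
  | nil =>
    rw [List.nil_append, conv_nil, add_zero, muW_nil, etaW_nil, omegaW_true_cons, omegaW_nil,
      mul_one, smul_mul_assoc, one_mul, two_smul_helper]
  | cons y w ih =>
    cases y
    · -- y = false
      cases w with
      | nil =>
        rw [conv_cons]
        simp only [List.length_nil, Finset.range_zero, Finset.sum_empty, zero_add]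
        rw [muW_false_cons, zero_add]
        show omegaW [false, true] = etaW [false] * genB + etaW [] * genB * omegaW [true]
        rw [omegaW_ft, omegaW_nil, mul_one, etaW_nil, omegaW_true_cons, omegaW_nil, mul_one]
        have he : etaW [false] = (2 : ℤ) • amb := by
          rw [etaW, if_pos (List.isChain_singleton false)]
          simp
        rw [he, smul_mul_assoc, smul_mul_assoc, smul_mul_assoc, one_mul, ← smul_add]
        congr 1
        rw [genD, amb, genC]
        noncomm_ring
      | cons z w' =>
        cases z
        · -- w = false :: w'
          rw [List.cons_append, List.cons_append, omegaW_ff, ← List.cons_append]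
          rw [muW_false_cons, zero_add]
          rw [conv_cons]
          have hsum : ∀ i ∈ Finset.range (false :: w').length,
              etaW (false :: (false :: w').take i) * genB
                  * omegaW ((false :: w').drop (i + 1) ++ [true])
                = amb * (etaW ((false :: w').take i) * genB
                  * omegaW ((false :: w').drop (i + 1) ++ [true])) := by
            intro i _
            have hh : ((false :: w').take i).head? ≠ some true := by
              cases i <;> simp
            rw [etaW_false_cons _ hh, mul_reassoc]
          rw [Finset.sum_congr rfl hsum, ← Finset.mul_sum, etaW_nil, etaW_false_cons _ (by simp)]
          have hconv : ∑ i ∈ Finset.range (false :: w').length,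
              etaW ((false :: w').take i) * genB
                * omegaW ((false :: w').drop (i + 1) ++ [true])
              = conv etaW (fun u => omegaW (u ++ [true])) (false :: w') := by
            rw [conv]
          rw [hconv]
          have ih' : conv etaW (fun u => omegaW (u ++ [true])) (false :: w')
              = omegaW ((false :: w') ++ [true]) - etaW (false :: w') * genB := by
            rw [ih, muW_false_cons, zero_add]; abel
          rw [ih']
          rw [smul_mul_assoc, smul_mul_assoc, one_mul]
          rw [← two_smul_helper]
          noncomm_ring
        · -- w = true :: w'
          rw [List.cons_append, List.cons_append, omegaW_ft, muW_false_cons, zero_add,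
            etaW_false_true, zero_mul, zero_add, conv_cons, List.length_cons,
            Finset.sum_range_succ']
          have hz : ∀ i ∈ Finset.range w'.length,
              etaW (false :: (true :: w').take (i + 1)) * genB
                * omegaW ((true :: w').drop (i + 1 + 1) ++ [true]) = 0 := by
            intro i _
            rw [List.take_succ_cons, etaW_false_true, zero_mul, zero_mul]
          rw [Finset.sum_congr rfl hz, Finset.sum_const_zero, zero_add]
          show _ = etaW [false] * genB * omegaW (w' ++ [true])
              + etaW [] * genB * omegaW ((true :: w') ++ [true])
          rw [List.cons_append, omegaW_true_cons, etaW_nil]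
          have he : etaW [false] = (2 : ℤ) • amb := by
            rw [etaW, if_pos (List.isChain_singleton false)]
            simp
          rw [he]
          simp only [smul_mul_assoc, one_mul]
          rw [← smul_add]
          congr 1
          rw [genD, amb, genC]
          noncomm_ring
    · -- y = true
      rw [List.cons_append, omegaW_true_cons, muW_true_cons, etaW_true_cons, conv_cons]
      have hsum : ∀ i ∈ Finset.range w.length,
          etaW (true :: w.take i) * genB * omegaW (w.drop (i + 1) ++ [true])
            = amb * (etaW (w.take i) * genB * omegaW (w.drop (i + 1) ++ [true])) := by
        intro i _
        rw [etaW_true_cons, mul_reassoc]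
      rw [Finset.sum_congr rfl hsum, ← Finset.mul_sum, etaW_nil]
      have hconv : ∑ i ∈ Finset.range w.length,
          etaW (w.take i) * genB * omegaW (w.drop (i + 1) ++ [true])
          = conv etaW (fun u => omegaW (u ++ [true])) w := by
        rw [conv]
      rw [hconv, ih, smul_mul_assoc, smul_mul_assoc, one_mul, ← two_smul_helper]
      noncomm_ring

lemma GW_append : ∀ (n : ℕ) (w : Word), w.length ≤ n → ∀ z : Bool,
    GW (w ++ [z]) = omegaW (w ++ [true]) := by
  intro n
  induction n with
  | zero =>
    intro w hw z
    have hwnil : w = [] := List.eq_nil_of_length_eq_zero (Nat.le_zero.1 hw)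
    subst hwnil
    rw [GW_eq, lamT_append, muW_nil]
    simp only [List.nil_append]
    rw [conv_cons]
    simp only [List.length_nil, Finset.range_zero, Finset.sum_empty, zero_add]
    rw [GW_nil, mul_one, etaW_nil, omegaW_true_cons, omegaW_nil, mul_one,
      smul_mul_assoc, one_mul, two_smul_helper]
  | succ n ih =>
    intro w hw z
    rw [GW_eq, lamT_append, omega_expand w, add_assoc]
    congr 1
    rw [conv]
    have hlen : (w ++ [z]).length = w.length + 1 := by simp
    rw [hlen, Finset.sum_range_succ, List.take_left]
    have hdrop : (w ++ [z]).drop (w.length + 1) = [] := by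
      apply List.drop_eq_nil_of_le
      simp
    rw [hdrop, GW_nil, mul_one, add_comm]
    congr 1
    rw [conv]
    refine Finset.sum_congr rfl fun i hi => ?_
    have hi' := Finset.mem_range.1 hi
    rw [List.take_append_of_le_length hi'.le,
      List.drop_append_of_le_length (by omega : i + 1 ≤ w.length),
      ih (w.drop (i + 1)) (by rw [List.length_drop]; omega) z]

end Aux


/-- for an ab-monomial `v` beginning with `a`, an integer `k ≥ 1` and a
letter `x`, `2·φ_t(v·a·bᵏ·x) = 2·κ(v·a·bᵏ·x) + ω(v·a·b^{k+1})`. -/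
theorem two_phiT_abk (w : Word) (k : ℕ) (hk : 1 ≤ k) (x : Bool) :
    (2 : ℤ) • phiTW ((false :: w) ++ [false] ++ List.replicate k true ++ [x]) =
      (2 : ℤ) • kappaW ((false :: w) ++ [false] ++ List.replicate k true ++ [x]) +
        omegaW ((false :: w) ++ [false] ++ List.replicate (k + 1) true) := by
  set r : Word := w ++ [false] ++ List.replicate k true with hr
  have htr : true ∈ r := by
    rw [hr]
    exact List.mem_append_right _ (List.mem_replicate.2 ⟨by omega, rfl⟩)
  have hlist : (false :: w) ++ [false] ++ List.replicate k true = false :: r := by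
    simp [hr]
  have hω : (false :: w) ++ [false] ++ List.replicate (k + 1) true
      = (false :: r) ++ [true] := by
    rw [List.replicate_succ', ← List.append_assoc, hlist]
  rw [hlist, hω]
  set v : Word := false :: r with hv
  have htv : true ∈ v := List.mem_cons_of_mem _ htr
  have hμv : muW v = 0 := muW_false_cons r
  have hηv : etaW v = 0 := by
    rw [etaW, if_neg]
    intro hc
    have hsub : [false, true].Sublist v :=
      List.cons_sublist_cons.2 (List.singleton_sublist.2 htr)
    have := hc.sublist hsub
    rw [List.isChain_cons_cons] at this
    exact absurd this.1 (by decide)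
  have hOmega : omegaW (v ++ [true])
      = conv etaW (fun u => omegaW (u ++ [true])) v := by
    rw [omega_expand v, hμv, hηv, zero_mul, zero_add, zero_add]
  rw [phiT_eq, smul_add, hOmega]
  congr 1
  -- goal: 2 • conv kappaW GW (v ++ [x]) = conv etaW Og v
  rw [conv, conv]
  have hlen : (v ++ [x]).length = v.length + 1 := by simp
  rw [hlen, Finset.sum_range_succ, List.take_left, kappaW_eq_zero htv, zero_mul, zero_mul,
    add_zero, Finset.smul_sum]
  refine Finset.sum_congr rfl fun i hi => ?_
  have hi' := Finset.mem_range.1 hi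
  rw [List.take_append_of_le_length hi'.le,
    List.drop_append_of_le_length (by omega : i + 1 ≤ v.length),
    GW_append v.length (v.drop (i + 1)) (by rw [List.length_drop]; omega) x,
    ← smul_mul_assoc, ← smul_mul_assoc, two_kappa]
  cases i <;> simp [hv]


end CD

end
end

section
/- For every v ∈ ℤ⟨a,b⟩, φ_ub(v) = φ(v) − 2·Σ_v φ(v₍₁₎)·b·β(v₍₂₎), where the sum is over the coproduct Δ(v) = Σ_v v₍₁₎ ⊗ v₍₂₎. -/
open scoped TensorProduct

noncomputable section

namespace CD


lemma conv_apply (F G : Word → ZAB) (w : Word) :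
    conv F G w = ∑ i ∈ Finset.range w.length, F (w.take i) * genB * G (w.drop (i + 1)) := rfl

open Finset in
lemma sum_swap_tri (f : ℕ → ℕ → ZAB) :
    ∀ n : ℕ, ∑ i ∈ range n, ∑ j ∈ range i, f i j
      = ∑ j ∈ range n, ∑ m ∈ range (n - (j + 1)), f (j + m + 1) j := by
  intro n
  induction n with
  | zero => simp
  | succ n ih =>
    rw [Finset.sum_range_succ, ih, Finset.sum_range_succ]
    simp only [Nat.sub_self, Finset.range_zero, Finset.sum_empty, add_zero]
    rw [← Finset.sum_add_distrib]
    refine Finset.sum_congr rfl fun j hj => ?_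
    rw [Finset.mem_range] at hj
    have h1 : n + 1 - (j + 1) = (n - (j + 1)) + 1 := by omega
    rw [h1, Finset.sum_range_succ]
    congr 2
    omega

lemma conv_assoc (F G H : Word → ZAB) (w : Word) :
    conv (conv F G) H w = conv F (conv G H) w := by
  rw [conv_apply (conv F G) H w, conv_apply F (conv G H) w]
  have L : ∀ i ∈ Finset.range w.length,
      conv F G (w.take i) * genB * H (w.drop (i + 1))
        = ∑ j ∈ Finset.range i,
            F (w.take j) * genB * (G ((w.drop (j + 1)).take (i - (j + 1))) * genB
              * H (w.drop (i + 1))) := by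
    intro i hi
    rw [Finset.mem_range] at hi
    rw [conv_apply F G]
    rw [List.length_take, min_eq_left hi.le, Finset.sum_mul, Finset.sum_mul]
    refine Finset.sum_congr rfl fun j hj => ?_
    rw [Finset.mem_range] at hj
    rw [List.take_take, min_eq_left hj.le, List.drop_take]
    simp only [mul_assoc]
  rw [Finset.sum_congr rfl L, sum_swap_tri]
  refine Finset.sum_congr rfl fun j hj => ?_
  rw [Finset.mem_range] at hj
  rw [conv_apply G H, Finset.mul_sum, List.length_drop]
  refine Finset.sum_congr rfl fun m hm => ?_
  rw [Finset.mem_range] at hm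
  have h1 : j + m + 1 - (j + 1) = m := by omega
  have h2 : w.drop (j + m + 1 + 1) = (w.drop (j + 1)).drop (m + 1) := by
    rw [List.drop_drop]; congr 1; omega
  rw [h1, h2]

lemma tailChain_vanish (lam : Word → ZAB) :
    ∀ j, ∀ u : Word, u.length < j → tailChain lam j u = 0 := by
  intro j
  induction j with
  | zero => intro u h; omega
  | succ j ih =>
    intro u h
    show conv etaW (tailChain lam j) u = 0
    rw [conv_apply]
    refine Finset.sum_eq_zero fun i hi => ?_
    rw [Finset.mem_range] at hi
    rw [ih _ (by rw [List.length_drop]; omega), mul_zero]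

lemma phiK_vanish (k : ℕ) (u : Word) (h : u.length + 1 < k) : phiK k u = 0 := by
  match k with
  | 0 => omega
  | 1 => omega
  | m + 2 =>
    show conv kappaW (tailChain etaW m) u = 0
    rw [conv_apply]
    refine Finset.sum_eq_zero fun i hi => ?_
    rw [Finset.mem_range] at hi
    rw [tailChain_vanish etaW m _ (by rw [List.length_drop]; omega), mul_zero]

lemma tailChain_lamUb (j : ℕ) (u : Word) :
    tailChain lamUbW j u = tailChain etaW j u - (2 : ℤ) • tailChain betaW j u := by
  induction j generalizing u with
  | zero =>
    show lamUbW u = etaW u - (2 : ℤ) • betaW u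
    rfl
  | succ j ih =>
    show conv etaW (tailChain lamUbW j) u = conv etaW (tailChain etaW j) u
      - (2 : ℤ) • conv etaW (tailChain betaW j) u
    rw [conv_apply etaW (tailChain lamUbW j), conv_apply etaW (tailChain etaW j),
      conv_apply etaW (tailChain betaW j), Finset.smul_sum, ← Finset.sum_sub_distrib]
    refine Finset.sum_congr rfl fun i _ => ?_
    rw [ih, mul_sub, mul_smul_comm]

lemma conv_tailChain_eta_beta (k : ℕ) (w : Word) :
    conv (tailChain etaW k) betaW w = tailChain betaW (k + 1) w := by
  induction k generalizing w with
  | zero => rfl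
  | succ k ih =>
    show conv (conv etaW (tailChain etaW k)) betaW w = conv etaW (tailChain betaW (k + 1)) w
    rw [conv_assoc,
      show (conv (tailChain etaW k) betaW : Word → ZAB) = tailChain betaW (k + 1) from
        funext ih]

lemma conv_phiW_betaW (w : Word) :
    conv phiW betaW w
      = ∑ m ∈ Finset.range w.length, conv kappaW (tailChain betaW m) w := by
  rcases w with _ | ⟨x, t⟩
  · simp [conv_apply]
  set n := t.length with hn
  have hw : (x :: t).length = n + 1 := by simp [hn]
  have step1 : conv phiW betaW (x :: t)
      = ∑ k ∈ Finset.range (n + 2), conv (phiK k) betaW (x :: t) := by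
    rw [conv_apply, hw]
    have ext : ∀ i ∈ Finset.range (n + 1),
        phiW ((x :: t).take i) * genB * betaW ((x :: t).drop (i + 1))
          = ∑ k ∈ Finset.range (n + 2),
              phiK k ((x :: t).take i) * genB * betaW ((x :: t).drop (i + 1)) := by
      intro i hi
      rw [Finset.mem_range] at hi
      have hlen : ((x :: t).take i).length = i := by
        rw [List.length_take, hw]; omega
      unfold phiW
      rw [hlen, Finset.sum_mul, Finset.sum_mul]
      refine Finset.sum_subset (by
        intro k hk
        rw [Finset.mem_range] at *
        omega) ?_
      intro k _ hk
      rw [Finset.mem_range, not_lt] at hk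
      rw [phiK_vanish k _ (by rw [hlen]; omega), zero_mul, zero_mul]
    rw [Finset.sum_congr rfl ext, Finset.sum_comm]
    refine Finset.sum_congr rfl fun k _ => ?_
    rw [conv_apply, hw]
  rw [step1, hw, Finset.sum_range_succ', Finset.sum_range_succ', Finset.sum_range_succ']
  have h0 : conv (phiK 0) betaW (x :: t) = 0 := by
    show conv (fun _ => (0 : ZAB)) betaW (x :: t) = 0
    simp [conv_apply]
  have h2 : ∀ m : ℕ, conv (phiK (m + 1 + 1)) betaW (x :: t)
      = conv kappaW (tailChain betaW (m + 1)) (x :: t) := by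
    intro m
    show conv (conv kappaW (tailChain etaW m)) betaW (x :: t) = _
    rw [conv_assoc,
      show (conv (tailChain etaW m) betaW : Word → ZAB) = tailChain betaW (m + 1) from
        funext (conv_tailChain_eta_beta m)]
  simp only [h0, h2, add_zero]
  have h1 : conv (phiK (0 + 1)) betaW (x :: t)
      = conv kappaW (tailChain betaW 0) (x :: t) := rfl
  rw [h1]

lemma phiUbW_word (w : Word) :
    phiUbW w = phiW w - (2 : ℤ) • conv phiW betaW w := by
  have split : ∀ (F : ℕ → Word → ZAB),
      (∑ k ∈ Finset.range (w.length + 2), F k w)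
        = F 0 w + F 1 w + ∑ m ∈ Finset.range w.length, F (m + 2) w := by
    intro F
    rw [Finset.sum_range_succ', Finset.sum_range_succ']
    show (∑ x ∈ Finset.range w.length, F (x + 2) w) + F 1 w + F 0 w = _
    abel
  rw [conv_phiW_betaW]
  show (∑ k ∈ Finset.range (w.length + 2), phiUbK k w)
    = (∑ k ∈ Finset.range (w.length + 2), phiK k w) - _
  rw [split phiUbK, split phiK]
  have key : ∀ m ∈ Finset.range w.length, phiUbK (m + 2) w
      = phiK (m + 2) w - (2 : ℤ) • conv kappaW (tailChain betaW m) w := by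
    intro m _
    show conv kappaW (tailChain lamUbW m) w
      = conv kappaW (tailChain etaW m) w - (2 : ℤ) • conv kappaW (tailChain betaW m) w
    rw [conv_apply kappaW (tailChain lamUbW m), conv_apply kappaW (tailChain etaW m),
      conv_apply kappaW (tailChain betaW m), Finset.smul_sum, ← Finset.sum_sub_distrib]
    refine Finset.sum_congr rfl fun i _ => ?_
    rw [tailChain_lamUb, mul_sub, mul_smul_comm]
  rw [Finset.sum_congr rfl key, Finset.sum_sub_distrib]
  have h0 : phiUbK 0 w = phiK 0 w := rfl
  have h1 : phiUbK 1 w = phiK 1 w := rfl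
  rw [h0, h1, Finset.smul_sum]
  abel

lemma lin_mon (f : Word → ZAB) (w : Word) : lin f (mon w) = f w := by
  rw [lin, mon, LinearMap.comp_apply, LinearEquiv.coe_coe, MonoidAlgebra.coeffLinearEquiv_apply,
    MonoidAlgebra.coeff_single]
  show (Finsupp.single (FreeMonoid.ofList w) (1 : ℤ)).sum
    (fun x r => r • f (FreeMonoid.toList x)) = f w
  rw [Finsupp.sum_single_index (by simp), one_smul, FreeMonoid.toList_ofList]

lemma Delta_mon (w : Word) :
    Delta (mon w) = ∑ i ∈ Finset.range w.length,
      mon (w.take i) ⊗ₜ[ℤ] mon (w.drop (i + 1)) := by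
  rw [Delta, mon, LinearMap.comp_apply, LinearEquiv.coe_coe, MonoidAlgebra.coeffLinearEquiv_apply,
    MonoidAlgebra.coeff_single]
  show (Finsupp.single (FreeMonoid.ofList w) (1 : ℤ)).sum
    (fun x r => r • ∑ i ∈ Finset.range (FreeMonoid.toList x).length,
      mon ((FreeMonoid.toList x).take i) ⊗ₜ[ℤ] mon ((FreeMonoid.toList x).drop (i + 1))) = _
  rw [Finsupp.sum_single_index (by simp), one_smul, FreeMonoid.toList_ofList]

lemma sandwich_tmul (F G : ZAB →ₗ[ℤ] ZAB) (x y : ZAB) :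
    sandwich F G (x ⊗ₜ[ℤ] y) = F x * genB * G y := by
  unfold sandwich
  erw [TensorProduct.lift.tmul]
  rfl

/-- `φ_ub(v) = φ(v) - 2·Σ_v φ(v₍₁₎)·b·β(v₍₂₎)`. -/
theorem phiUb_functional_equation (v : ZAB) :
    lin phiUbW v = lin phiW v - (2 : ℤ) • sandwich (lin phiW) (lin betaW) (Delta v) := by
  have main : ∀ w : Word, lin phiUbW (mon w)
      = (lin phiW - (2 : ℤ) • ((sandwich (lin phiW) (lin betaW)).comp Delta)) (mon w) := by
    intro w
    rw [LinearMap.sub_apply, LinearMap.smul_apply, LinearMap.comp_apply,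
      lin_mon, lin_mon, Delta_mon, map_sum]
    have hterm : ∀ i ∈ Finset.range w.length,
        sandwich (lin phiW) (lin betaW)
            (mon (w.take i) ⊗ₜ[ℤ] mon (w.drop (i + 1)))
          = phiW (w.take i) * genB * betaW (w.drop (i + 1)) := by
      intro i _
      rw [sandwich_tmul, lin_mon, lin_mon]
    rw [Finset.sum_congr rfl hterm, phiUbW_word, conv_apply]
  have key : lin phiUbW
      = lin phiW - (2 : ℤ) • ((sandwich (lin phiW) (lin betaW)).comp Delta) := by
    apply MonoidAlgebra.lhom_ext'
    intro x
    apply LinearMap.ext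
    intro r
    have hx : MonoidAlgebra.lsingle (R := ℤ) x (r : ℤ) = r • mon (FreeMonoid.toList x) := by
      simp [mon, MonoidAlgebra.smul_single]
    rw [LinearMap.comp_apply, LinearMap.comp_apply, hx, map_smul, map_smul]
    exact congrArg (r • ·) (main (FreeMonoid.toList x))
  rw [key, LinearMap.sub_apply, LinearMap.smul_apply, LinearMap.comp_apply]

end CD

end
end

section
/- For every ab-monomial v, φ_ub(v·a·b) = 0. -/
open scoped TensorProduct

noncomputable section

namespace CD


lemma lamUbW_nil : lamUbW [] = 0 := by
  simp [lamUbW, etaW, betaW, amb]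

lemma lamUbW_b : lamUbW [true] = 0 := by
  simp [lamUbW, etaW, betaW]

lemma lamUbW_ab (u : Word) : lamUbW (u ++ [false, true]) = 0 := by
  have hchain : ¬ List.IsChain (· ≥ ·) (u ++ [false, true]) := by
    intro h
    have := (List.isChain_append.mp h).2.1
    simp [List.isChain_cons_cons] at this
    exact absurd this (by decide)
  have hmem : false ∈ u ++ [false, true] := by simp
  simp [lamUbW, etaW, betaW, hchain]

lemma kappaW_ab (u : Word) : kappaW (u ++ [false, true]) = 0 := by
  have hmem : true ∈ u ++ [false, true] := by simp
  simp [kappaW]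

lemma tailChain_nil (j : ℕ) : tailChain lamUbW j [] = 0 := by
  cases j with
  | zero => exact lamUbW_nil
  | succ j => simp [tailChain, conv]

lemma tailChain_b (j : ℕ) : tailChain lamUbW j [true] = 0 := by
  cases j with
  | zero => exact lamUbW_b
  | succ j =>
    simp [tailChain, conv, tailChain_nil]

lemma conv_ab (F G : Word → ZAB) (h0 : G [] = 0) (hb : G [true] = 0)
    (hab : ∀ u, G (u ++ [false, true]) = 0) (u : Word) :
    conv F G (u ++ [false, true]) = 0 := by
  unfold conv
  apply Finset.sum_eq_zero
  intro i hi
  simp only [List.length_append, List.length_cons, List.length_nil, Finset.mem_range] at hi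
  rcases lt_trichotomy i u.length with h | h | h
  · rw [List.drop_append_of_le_length (by omega)]
    have : (u.drop (i + 1)) ++ [false, true] = u.drop (i + 1) ++ [false, true] := rfl
    rw [hab, mul_zero]
  · subst h
    have : (u ++ [false, true]).drop (u.length + 1) = [true] := by
      simp
    rw [this, hb, mul_zero]
  · have hi2 : i = u.length + 1 := by omega
    subst hi2
    have : (u ++ [false, true]).drop (u.length + 1 + 1) = [] := by
      simp
    rw [this, h0, mul_zero]

lemma tailChain_ab (j : ℕ) (u : Word) : tailChain lamUbW j (u ++ [false, true]) = 0 := by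
  induction j generalizing u with
  | zero => exact lamUbW_ab u
  | succ j ih =>
    exact conv_ab etaW (tailChain lamUbW j) (tailChain_nil j) (tailChain_b j) ih u

lemma phiUbK_ab (k : ℕ) (u : Word) : phiUbK k (u ++ [false, true]) = 0 := by
  match k with
  | 0 => rfl
  | 1 => exact kappaW_ab u
  | k + 2 =>
    exact conv_ab kappaW (tailChain lamUbW k) (tailChain_nil k) (tailChain_b k)
      (tailChain_ab k) u

/-- for every ab-monomial `v`, `φ_ub(v·a·b) = 0`. -/
theorem phiUb_ab (w : Word) :
    phiUbW (w ++ [false, true]) = 0 := by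
  unfold phiUbW
  exact Finset.sum_eq_zero fun k _ => phiUbK_ab k w


end CD

end
end
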